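/- arXiv:2505.02719 — 2 statements merged into one kernel-verified Lean document; each statement's English description precedes it below -/
import Mathlib

section
/- Assume: (P) for every E-controlled set V ⊆ M one has sup_{x∈V} ‖P_x‖_{L(H)} < ∞; (P*) for each x ∈ M there is a bounded linear operator Pr_x : C → C with ι_C ∘ P_x = Pr_x ∘ ι_C, and sup_{x∈V} ‖Pr_x‖_{L(C)} < ∞ for every E-controlled V; (B*) for every K ∈ ℝ the sublevel set {x ∈ M : E(x) ≤ K} is bounded in H; (S) there exist μ : M → (0,∞), a continuous bilinear form Q : H × H → ℝ, and functionals R_x ∈ B* (x ∈ M) with DE_x h = μ(x) Q(x,h) + R_x(ι_B h) for all x ∈ M and h ∈ H, such that on every E-controlled set μ is bounded above and bounded away from 0, there is c > 0 with Q(h,h) ≥ c‖h‖_H² for all h ∈ H, and x ↦ ‖R_x‖_{B*} is bounded on every E-controlled set; (D) there are S_x ∈ B* (x ∈ M) with DE_x((Id_H − P_x)h) = S_x(ι_B h) for all h ∈ H, and x ↦ ‖S_x‖_{B*} is bounded on every E-controlled set; (L*) whenever a sequence (x_k) ⊆ M converges weakly in H to some x_∞ and sup_k F(ι_C x_k) <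 ∞, then x_∞ ∈ M. Then for every θ > 0 the total energy T := E + θ (F ∘ ι_C) satisfies the Palais–Smale condition on M: every sequence (x_k) ⊆ M with sup_k T(x_k) < ∞ and sup{ |DT_{x_k} h| : h ∈ T_{x_k}, ‖h‖_H ≤ 1 } → 0 as k → ∞ has a subsequence converging in the norm of H to a point of M. -/
open Set Filter Bornology
open scoped Topology Pointwise

noncomputable section

variable {H B C : Type*}
  [NormedAddCommGroup H] [InnerProductSpace ℝ H] [CompleteSpace H]
  [NormedAddCommGroup B] [NormedSpace ℝ B] [CompleteSpace B]
  [NormedAddCommGroup C] [NormedSpace ℝ C] [CompleteSpace C]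

/-- `V ⊆ M` is `E`-controlled: `V` is bounded in `H` and `E` is bounded on `V`. -/
def EControlled (E : H → ℝ) (M V : Set H) : Prop :=
  V ⊆ M ∧ IsBounded V ∧ ∃ Cb : ℝ, ∀ x ∈ V, |E x| ≤ Cb

/-- Weak convergence in the Hilbert space `H`. -/
def WeakTendsto (x : ℕ → H) (xlim : H) : Prop :=
  ∀ y : H, Tendsto (fun k => (inner ℝ y (x k) : ℝ)) atTop (𝓝 (inner ℝ y xlim : ℝ))

set_option linter.unusedSectionVars false

lemma exists_weakTendsto_subseq (x : ℕ → H) (R : ℝ) (hR : ∀ k, ‖x k‖ ≤ R) :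
    ∃ φ : ℕ → ℕ, StrictMono φ ∧ ∃ xlim : H, WeakTendsto (x ∘ φ) xlim := by
  have R0 : (0:ℝ) ≤ R := le_trans (norm_nonneg _) (hR 0)
  -- step 1: componentwise convergent subsequence against the x n themselves
  set ψ : ℕ → ℕ → ℝ := fun k n => (inner ℝ (x n) (x k) : ℝ) with hψ
  have hmem : ∀ k, ψ k ∈ Set.univ.pi (fun _ : ℕ => Metric.closedBall (0:ℝ) (R*R)) := by
    intro k n _
    simp only [Metric.mem_closedBall, Real.dist_eq, sub_zero]
    calc |(inner ℝ (x n) (x k) : ℝ)| ≤ ‖x n‖ * ‖x k‖ := abs_real_inner_le_norm _ _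
      _ ≤ R * R := mul_le_mul (hR n) (hR k) (norm_nonneg _) R0
  obtain ⟨L, -, φ, hφ, hL⟩ :=
    (isCompact_univ_pi (fun _ : ℕ => isCompact_closedBall (0:ℝ) (R*R))).tendsto_subseq hmem
  have hLcomp : ∀ n, Tendsto (fun k => (inner ℝ (x n) (x (φ k)) : ℝ)) atTop (𝓝 (L n)) := by
    intro n
    exact (tendsto_pi_nhds.mp hL) n
  refine ⟨φ, hφ, ?_⟩
  -- the closed span
  set K : Submodule ℝ H := (Submodule.span ℝ (Set.range x)).topologicalClosure with hK
  have hxK : ∀ k, x k ∈ K :=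
    fun k => (Submodule.le_topologicalClosure _) (Submodule.subset_span ⟨k, rfl⟩)
  -- convergence on span
  have conv_span : ∀ z ∈ Submodule.span ℝ (Set.range x),
      ∃ L', Tendsto (fun k => (inner ℝ z (x (φ k)) : ℝ)) atTop (𝓝 L') := by
    intro z hz
    induction hz using Submodule.span_induction with
    | mem z hz =>
      obtain ⟨n, rfl⟩ := hz
      exact ⟨L n, hLcomp n⟩
    | zero => exact ⟨0, by simp [inner_zero_left, tendsto_const_nhds]⟩
    | add z w _ _ hz hw =>
      obtain ⟨L1, h1⟩ := hz; obtain ⟨L2, h2⟩ := hw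
      exact ⟨L1 + L2, by simpa [inner_add_left] using h1.add h2⟩
    | smul a z _ hz =>
      obtain ⟨L1, h1⟩ := hz
      exact ⟨a * L1, by simpa [real_inner_smul_left] using h1.const_mul a⟩
  -- Cauchy on closure
  have cauchy_cl : ∀ z ∈ K, CauchySeq (fun k => (inner ℝ z (x (φ k)) : ℝ)) := by
    intro z hz
    rw [Metric.cauchySeq_iff]
    intro ε hε
    have hzc : z ∈ closure ((Submodule.span ℝ (Set.range x)) : Set H) := hz
    obtain ⟨z', hz', hdz⟩ := Metric.mem_closure_iff.mp hzc (ε / (3 * (R + 1)))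
      (by positivity)
    obtain ⟨L', hL'⟩ := conv_span z' hz'
    obtain ⟨N, hN⟩ := Metric.cauchySeq_iff.mp hL'.cauchySeq (ε/3) (by positivity)
    refine ⟨N, fun m hm n hn => ?_⟩
    have key : ∀ j, |(inner ℝ z (x (φ j)) : ℝ) - inner ℝ z' (x (φ j))| ≤ ε / 3 := by
      intro j
      have : (inner ℝ z (x (φ j)) : ℝ) - inner ℝ z' (x (φ j)) = inner ℝ (z - z') (x (φ j)) := by
        rw [inner_sub_left]
      rw [this]
      calc |(inner ℝ (z - z') (x (φ j)) : ℝ)| ≤ ‖z - z'‖ * ‖x (φ j)‖ := abs_real_inner_le_norm _ _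
        _ ≤ (ε / (3 * (R + 1))) * (R+1) := by
            apply mul_le_mul (le_of_lt (by simpa [dist_eq_norm] using hdz))
              (le_trans (hR _) (by linarith)) (norm_nonneg _) (by positivity)
        _ = ε / 3 := by field_simp
    have h2 : dist (inner ℝ z' (x (φ m)) : ℝ) (inner ℝ z' (x (φ n)) : ℝ) < ε / 3 := hN m hm n hn
    rw [Real.dist_eq] at h2 ⊢
    have t1 : |(inner ℝ z (x (φ m)) : ℝ) - inner ℝ z (x (φ n))| ≤
        |(inner ℝ z (x (φ m)) : ℝ) - inner ℝ z' (x (φ m))| +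
        |(inner ℝ z' (x (φ m)) : ℝ) - inner ℝ z (x (φ n))| := abs_sub_le _ _ _
    have t2 : |(inner ℝ z' (x (φ m)) : ℝ) - inner ℝ z (x (φ n))| ≤
        |(inner ℝ z' (x (φ m)) : ℝ) - inner ℝ z' (x (φ n))| +
        |(inner ℝ z' (x (φ n)) : ℝ) - inner ℝ z (x (φ n))| := abs_sub_le _ _ _
    have t3 : |(inner ℝ z' (x (φ n)) : ℝ) - inner ℝ z (x (φ n))| =
        |(inner ℝ z (x (φ n)) : ℝ) - inner ℝ z' (x (φ n))| := abs_sub_comm _ _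
    linarith [key m, key n]
  -- Cauchy for all y via orthogonal projection
  haveI : CompleteSpace K := (Submodule.span ℝ (Set.range x)).isClosed_topologicalClosure.completeSpace_coe
  have cauchy_all : ∀ y : H, CauchySeq (fun k => (inner ℝ y (x (φ k)) : ℝ)) := by
    intro y
    set z : H := (K.orthogonalProjectionOnto y : H) with hzdef
    have heq : (fun k => (inner ℝ y (x (φ k)) : ℝ)) = fun k => (inner ℝ z (x (φ k)) : ℝ) := by
      funext k
      have horth : y - z ∈ Kᗮ := K.sub_starProjection_mem_orthogonal y
      have h0 : (inner ℝ (x (φ k)) (y - z) : ℝ) = 0 :=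
        (Submodule.mem_orthogonal K (y - z)).mp horth (x (φ k)) (hxK (φ k))
      have h1 : (inner ℝ (y - z) (x (φ k)) : ℝ) = 0 := by
        rw [real_inner_comm]; exact h0
      have := inner_sub_left (𝕜 := ℝ) y z (x (φ k))
      rw [h1] at this
      linarith [this]
    rw [heq]
    exact cauchy_cl z (K.orthogonalProjectionOnto y).2
  have conv_all : ∀ y : H, ∃ L', Tendsto (fun k => (inner ℝ y (x (φ k)) : ℝ)) atTop (𝓝 L') :=
    fun y => cauchySeq_tendsto_of_complete (cauchy_all y)
  choose l hl using conv_all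
  -- build the limit functional
  have hmap_add : ∀ y w : H, l (y + w) = l y + l w := by
    intro y w
    refine tendsto_nhds_unique (hl (y + w)) ?_
    simpa [inner_add_left] using (hl y).add (hl w)
  have hmap_smul : ∀ (a : ℝ) (y : H), l (a • y) = a * l y := by
    intro a y
    refine tendsto_nhds_unique (hl (a • y)) ?_
    simpa [real_inner_smul_left] using (hl y).const_mul a
  let lm : H →ₗ[ℝ] ℝ :=
    { toFun := l, map_add' := hmap_add, map_smul' := hmap_smul }
  have hbound : ∀ y : H, ‖lm y‖ ≤ R * ‖y‖ := by
    intro y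
    have : ∀ k, |(inner ℝ y (x (φ k)) : ℝ)| ≤ R * ‖y‖ := by
      intro k
      calc |(inner ℝ y (x (φ k)) : ℝ)| ≤ ‖y‖ * ‖x (φ k)‖ := abs_real_inner_le_norm _ _
        _ ≤ ‖y‖ * R := mul_le_mul_of_nonneg_left (hR _) (norm_nonneg _)
        _ = R * ‖y‖ := mul_comm _ _
    have habs : Tendsto (fun k => |(inner ℝ y (x (φ k)) : ℝ)|) atTop (𝓝 |l y|) := (hl y).abs
    exact le_of_tendsto habs (Eventually.of_forall this)
  let f : H →L[ℝ] ℝ := LinearMap.mkContinuous lm R hbound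
  refine ⟨(InnerProductSpace.toDual ℝ H).symm f, fun y => ?_⟩
  have : (inner ℝ y ((InnerProductSpace.toDual ℝ H).symm f) : ℝ) = l y := by
    rw [real_inner_comm, InnerProductSpace.toDual_symm_apply]
    rfl
  rw [this]
  exact hl y

lemma compact_map_weak_strong (T : H →L[ℝ] B) (hT : IsCompactOperator T)
    (x : ℕ → H) (xlim : H) (R : ℝ) (hR : ∀ k, ‖x k‖ ≤ R)
    (hw : WeakTendsto x xlim) :
    Tendsto (fun k => T (x k)) atTop (𝓝 (T xlim)) := by
  -- weak convergence of T x k to T xlim against any dual functional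
  have hweakB : ∀ g : StrongDual ℝ B,
      Tendsto (fun k => g (T (x k))) atTop (𝓝 (g (T xlim))) := by
    intro g
    obtain ⟨y, hy⟩ := (InnerProductSpace.toDual ℝ H).surjective (g.comp T)
    have hy' : ∀ z : H, g (T z) = (inner ℝ y z : ℝ) := by
      intro z
      have := congrArg (fun f => (f : H →L[ℝ] ℝ) z) hy
      simpa [InnerProductSpace.toDual_apply_apply] using this.symm
    simpa [hy'] using hw y
  -- the sequence T x k lies in a compact set
  obtain ⟨Kc, hKc, hKnhds⟩ := hT
  obtain ⟨δ, hδ, hball⟩ := Metric.mem_nhds_iff.mp hKnhds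
  set a : ℝ := (2 * (R + 1)) / δ with ha
  have hR0 : (0:ℝ) ≤ R := le_trans (norm_nonneg _) (hR 0)
  have ha0 : 0 < a := by rw [ha]; positivity
  have hmem : ∀ k, T (x k) ∈ a • Kc := by
    intro k
    have h1 : (a⁻¹ • x k) ∈ Metric.ball (0 : H) δ := by
      rw [Metric.mem_ball, dist_zero_right, norm_smul, norm_inv]
      have hRe : ‖a‖ = a := abs_of_pos ha0
      rw [hRe, ha, inv_div]
      have hR1 : (0:ℝ) < R + 1 := by linarith
      calc δ / (2 * (R + 1)) * ‖x k‖ ≤ δ / (2 * (R + 1)) * (R + 1) := by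
            apply mul_le_mul_of_nonneg_left (by linarith [hR k]) (by positivity)
        _ = δ / 2 := by field_simp
        _ < δ := by linarith
    have h3 : T (a⁻¹ • x k) ∈ Kc := hball h1
    have h4 : T (x k) = a • T (a⁻¹ • x k) := by
      rw [map_smul, smul_smul, mul_inv_cancel₀ (ne_of_gt ha0), one_smul]
    rw [h4]
    exact Set.smul_mem_smul_set h3
  have hcpt : IsCompact (a • Kc) := hKc.smul a
  -- subsequence criterion
  apply tendsto_of_subseq_tendsto
  intro ns hns
  obtain ⟨Lb, -, ms, hms, hLb⟩ := hcpt.tendsto_subseq (fun j => hmem (ns j))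
  refine ⟨ms, ?_⟩
  have hident : Lb = T xlim := by
    rw [NormedSpace.eq_iff_forall_dual_eq ℝ]
    intro g
    have h5 : Tendsto (fun j => g (T (x (ns (ms j))))) atTop (𝓝 (g Lb)) :=
      (g.continuous.tendsto Lb).comp hLb
    have h6 : Tendsto (fun j => g (T (x (ns (ms j))))) atTop (𝓝 (g (T xlim))) :=
      (hweakB g).comp (hns.comp hms.tendsto_atTop)
    exact tendsto_nhds_unique h5 h6
  rw [← hident]
  exact hLb

set_option maxHeartbeats 1000000 in
/-- **The Palais–Smale condition for total energies in an abstract setting**: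
under (E) (compact embeddings `ι_B : H → B`, `ι_C : H → C`), (P), (P*), (B*), (S)
(with (S1), (S2), (S3)), (D) and (L*), for every `θ > 0` the restriction of the total
energy `T = E + θ (F ∘ ι_C)` to `M` satisfies the Palais–Smale condition. -/
theorem abstract_palais_smale_total_energy
    (E : H → ℝ) (DE : H → H →L[ℝ] ℝ) (F : C → ℝ) (DF : C → C →L[ℝ] ℝ)
    (ιB : H →L[ℝ] B) (ιC : H →L[ℝ] C) (O M : Set H) (U : Set C)
    -- compact embeddings and open sets
    (hιB_inj : Function.Injective ιB) (hιB_cpt : IsCompactOperator ιB)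
    (hιC_inj : Function.Injective ιC) (hιC_cpt : IsCompactOperator ιC)
    (hO : IsOpen O) (hU : IsOpen U) (hMO : M ⊆ O) (hOU : ιC '' O ⊆ U)
    -- `E` and `F` are continuously Fréchet differentiable
    (hE : ∀ x ∈ O, HasFDerivAt E (DE x) x) (hEc : ContinuousOn DE O)
    (hF : ∀ y ∈ U, HasFDerivAt F (DF y) y) (hFc : ContinuousOn DF U)
    -- `E` and `F` are bounded below on `M` resp. `ι_C(M)`
    (hElb : ∃ e : ℝ, ∀ x ∈ M, e ≤ E x)
    (hFlb : ∃ e' : ℝ, ∀ x ∈ M, e' ≤ F (ιC x))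
    -- the projectors onto the tangent spaces
    (P : H → H →L[ℝ] H) (hP_idem : ∀ x ∈ M, ∀ h : H, P x (P x h) = P x h)
    -- (P)
    (hP : ∀ V : Set H, EControlled E M V → ∃ Cb : ℝ, ∀ x ∈ V, ‖P x‖ ≤ Cb)
    -- (P*)
    (Pr : H → C →L[ℝ] C)
    (hPr : ∀ x ∈ M, ∀ h : H, ιC (P x h) = Pr x (ιC h))
    (hPrBdd : ∀ V : Set H, EControlled E M V → ∃ Cb : ℝ, ∀ x ∈ V, ‖Pr x‖ ≤ Cb)
    -- (B*)
    (hBstar : ∀ K : ℝ, IsBounded {x ∈ M | E x ≤ K})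
    -- (S): splitting of the differential
    (μ : H → ℝ) (Q : H →L[ℝ] H →L[ℝ] ℝ) (R : H → B →L[ℝ] ℝ)
    (hμ_pos : ∀ x ∈ M, 0 < μ x)
    (hsplit : ∀ x ∈ M, ∀ h : H, DE x h = μ x * Q x h + R x (ιB h))
    (hS1 : ∀ V : Set H, EControlled E M V →
      ∃ m M' : ℝ, 0 < m ∧ m ≤ M' ∧ ∀ x ∈ V, m ≤ μ x ∧ μ x ≤ M')
    (hS2 : ∃ c > 0, ∀ h : H, c * ‖h‖ ^ 2 ≤ Q h h)
    (hS3 : ∀ V : Set H, EControlled E M V → ∃ Cb : ℝ, ∀ x ∈ V, ‖R x‖ ≤ Cb)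
    -- (D)
    (S : H → B →L[ℝ] ℝ)
    (hD : ∀ x ∈ M, ∀ h : H, DE x (h - P x h) = S x (ιB h))
    (hDbdd : ∀ V : Set H, EControlled E M V → ∃ Cb : ℝ, ∀ x ∈ V, ‖S x‖ ≤ Cb)
    -- (L*)
    (hLstar : ∀ (x : ℕ → H) (xlim : H), (∀ k, x k ∈ M) → WeakTendsto x xlim →
      (∃ Cb : ℝ, ∀ k, F (ιC (x k)) ≤ Cb) → xlim ∈ M)
    -- the total energy for `θ > 0`
    (θ : ℝ) (hθ : 0 < θ) :
    ∀ x : ℕ → H, (∀ k, x k ∈ M) →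
      (∃ Cb : ℝ, ∀ k, E (x k) + θ * F (ιC (x k)) ≤ Cb) →
      (∀ ε > 0, ∃ N : ℕ, ∀ k ≥ N, ∀ h ∈ Set.range (P (x k)), ‖h‖ ≤ 1 →
        |DE (x k) h + θ * DF (ιC (x k)) (ιC h)| ≤ ε) →
      ∃ (φ : ℕ → ℕ) (xlim : H), StrictMono φ ∧ xlim ∈ M ∧
        Tendsto (x ∘ φ) atTop (𝓝 xlim) := by
  intro x hxM hTb hPS
  obtain ⟨Cb, hCb⟩ := hTb
  obtain ⟨e, he⟩ := hElb
  obtain ⟨e', he'⟩ := hFlb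
  -- bounds on E and F along the sequence
  have hEub : ∀ k, E (x k) ≤ Cb - θ * e' := by
    intro k
    have h1 := hCb k
    have h2 : θ * e' ≤ θ * F (ιC (x k)) :=
      mul_le_mul_of_nonneg_left (he' _ (hxM k)) hθ.le
    linarith
  have hFub : ∀ k, F (ιC (x k)) ≤ (Cb - e) / θ := by
    intro k
    rw [le_div_iff₀ hθ]
    have h1 := hCb k
    have h2 := he _ (hxM k)
    have h3 : F (ιC (x k)) * θ = θ * F (ιC (x k)) := mul_comm _ _
    linarith
  -- the range of the sequence is E-controlled
  have hVbdd : IsBounded (Set.range x) := by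
    refine (hBstar (Cb - θ * e')).subset ?_
    rintro z ⟨k, rfl⟩
    exact ⟨hxM k, hEub k⟩
  have hVctrl : EControlled E M (Set.range x) := by
    refine ⟨by rintro z ⟨k, rfl⟩; exact hxM k, hVbdd, |e| + |Cb - θ * e'|, ?_⟩
    rintro z ⟨k, rfl⟩
    have h1 := he _ (hxM k)
    have h2 := hEub k
    rw [abs_le]
    constructor
    · have := neg_abs_le e
      have := abs_nonneg (Cb - θ * e')
      linarith
    · have := le_abs_self (Cb - θ * e')
      have := abs_nonneg e
      linarith
  obtain ⟨Rb, hRnorm⟩ := isBounded_iff_forall_norm_le.mp hVbdd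
  have hRk : ∀ k, ‖x k‖ ≤ Rb := fun k => hRnorm _ ⟨k, rfl⟩
  have hR0 : (0:ℝ) ≤ Rb := le_trans (norm_nonneg _) (hRk 0)
  -- weakly convergent subsequence
  obtain ⟨φ, hφ, xlim, hweak⟩ := exists_weakTendsto_subseq x Rb hRk
  have hweak' : ∀ y : H, Tendsto (fun k => (inner ℝ y (x (φ k)) : ℝ)) atTop
      (𝓝 (inner ℝ y xlim : ℝ)) := hweak
  -- the weak limit belongs to M
  have hxlimM : xlim ∈ M :=
    hLstar (x ∘ φ) xlim (fun k => hxM (φ k)) hweak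
      ⟨(Cb - e) / θ, fun k => hFub (φ k)⟩
  -- strong convergence of the embedded sequences
  have hιC_conv : Tendsto (fun k => ιC (x (φ k))) atTop (𝓝 (ιC xlim)) :=
    compact_map_weak_strong ιC hιC_cpt (x ∘ φ) xlim Rb (fun k => hRk (φ k)) hweak
  have hιB_conv : Tendsto (fun k => ιB (x (φ k))) atTop (𝓝 (ιB xlim)) :=
    compact_map_weak_strong ιB hιB_cpt (x ∘ φ) xlim Rb (fun k => hRk (φ k)) hweak
  have hnC : Tendsto (fun k => ‖ιC (x (φ k) - xlim)‖) atTop (𝓝 0) := by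
    have h0 : Tendsto (fun k => ιC (x (φ k)) - ιC xlim) atTop (𝓝 0) := by
      simpa using hιC_conv.sub (tendsto_const_nhds (x := ιC xlim))
    simpa [map_sub] using h0.norm
  have hnB : Tendsto (fun k => ‖ιB (x (φ k) - xlim)‖) atTop (𝓝 0) := by
    have h0 : Tendsto (fun k => ιB (x (φ k)) - ιB xlim) atTop (𝓝 0) := by
      simpa using hιB_conv.sub (tendsto_const_nhds (x := ιB xlim))
    simpa [map_sub] using h0.norm
  -- bounds from the E-controlled set
  obtain ⟨CP, hCP⟩ := hP _ hVctrl
  obtain ⟨CPr, hCPr⟩ := hPrBdd _ hVctrl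
  obtain ⟨m, M', hm, hmM', hμb⟩ := hS1 _ hVctrl
  obtain ⟨c, hc, hS2'⟩ := hS2
  obtain ⟨CR, hCR⟩ := hS3 _ hVctrl
  obtain ⟨CS, hCS⟩ := hDbdd _ hVctrl
  have hmemV : ∀ k, x (φ k) ∈ Set.range x := fun k => ⟨φ k, rfl⟩
  have hCP0 : (0:ℝ) ≤ CP := le_trans (norm_nonneg _) (hCP _ (hmemV 0))
  have hCPr0 : (0:ℝ) ≤ CPr := le_trans (norm_nonneg _) (hCPr _ (hmemV 0))
  have hCR0 : (0:ℝ) ≤ CR := le_trans (norm_nonneg _) (hCR _ (hmemV 0))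
  have hCS0 : (0:ℝ) ≤ CS := le_trans (norm_nonneg _) (hCS _ (hmemV 0))
  have hhbd : ∀ k, ‖x (φ k) - xlim‖ ≤ Rb + ‖xlim‖ := fun k =>
    le_trans (norm_sub_le _ _) (add_le_add_left (hRk (φ k)) _)
  have hRh0 : (0:ℝ) ≤ Rb + ‖xlim‖ := add_nonneg hR0 (norm_nonneg _)
  set a : ℝ := CP * (Rb + ‖xlim‖) + 1 with ha
  have ha0 : (0:ℝ) < a := by
    have : (0:ℝ) ≤ CP * (Rb + ‖xlim‖) := mul_nonneg hCP0 hRh0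
    rw [ha]; linarith
  have hgbd : ∀ k, ‖P (x (φ k)) (x (φ k) - xlim)‖ ≤ CP * (Rb + ‖xlim‖) := by
    intro k
    calc ‖P (x (φ k)) (x (φ k) - xlim)‖
        ≤ ‖P (x (φ k))‖ * ‖x (φ k) - xlim‖ := ContinuousLinearMap.le_opNorm _ _
      _ ≤ CP * (Rb + ‖xlim‖) :=
        mul_le_mul (hCP _ (hmemV k)) (hhbd k) (norm_nonneg _) hCP0
  -- convergence of DF along the sequence
  have hUinf : ιC xlim ∈ U := hOU ⟨xlim, hMO hxlimM, rfl⟩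
  have hUk : ∀ k, ιC (x (φ k)) ∈ U := fun k => hOU ⟨_, hMO (hxM (φ k)), rfl⟩
  have hDF_t : Tendsto (fun k => DF (ιC (x (φ k)))) atTop (𝓝 (DF (ιC xlim))) := by
    have h1 : Tendsto (fun k => ιC (x (φ k))) atTop (𝓝[U] (ιC xlim)) :=
      tendsto_nhdsWithin_iff.mpr ⟨hιC_conv, Eventually.of_forall hUk⟩
    exact (hFc _ hUinf).tendsto.comp h1
  have hDFnorm : ∀ᶠ k in atTop, ‖DF (ιC (x (φ k)))‖ ≤ ‖DF (ιC xlim)‖ + 1 :=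
    hDF_t.norm.eventually (eventually_le_nhds (lt_add_one _))
  -- Term 1: the Palais-Smale term tends to zero
  have hT1 : Tendsto (fun k => DE (x (φ k)) (P (x (φ k)) (x (φ k) - xlim)) +
      θ * DF (ιC (x (φ k))) (ιC (P (x (φ k)) (x (φ k) - xlim)))) atTop (𝓝 0) := by
    rw [Metric.tendsto_atTop]
    intro ε hε
    obtain ⟨N, hN⟩ := hPS (ε / (2 * a)) (by positivity)
    refine ⟨N, fun k hk => ?_⟩
    have hu : P (x (φ k)) (a⁻¹ • (x (φ k) - xlim)) =
        a⁻¹ • P (x (φ k)) (x (φ k) - xlim) := map_smul _ _ _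
    have hmem1 : P (x (φ k)) (a⁻¹ • (x (φ k) - xlim)) ∈
        Set.range (P (x (φ k))) := Set.mem_range_self _
    have hnorm1 : ‖P (x (φ k)) (a⁻¹ • (x (φ k) - xlim))‖ ≤ 1 := by
      rw [hu, norm_smul, norm_inv, Real.norm_eq_abs, abs_of_pos ha0]
      calc a⁻¹ * ‖P (x (φ k)) (x (φ k) - xlim)‖ ≤ a⁻¹ * a := by
            apply mul_le_mul_of_nonneg_left _ (inv_nonneg.mpr ha0.le)
            have := hgbd k
            rw [ha]; linarith
        _ = 1 := inv_mul_cancel₀ (ne_of_gt ha0)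
    have hb := hN (φ k) (le_trans hk hφ.le_apply) _ hmem1 hnorm1
    have hX : DE (x (φ k)) (P (x (φ k)) (a⁻¹ • (x (φ k) - xlim))) +
        θ * DF (ιC (x (φ k))) (ιC (P (x (φ k)) (a⁻¹ • (x (φ k) - xlim)))) =
        a⁻¹ * (DE (x (φ k)) (P (x (φ k)) (x (φ k) - xlim)) +
          θ * DF (ιC (x (φ k))) (ιC (P (x (φ k)) (x (φ k) - xlim)))) := by
      rw [hu, map_smul, map_smul, map_smul]
      simp only [smul_eq_mul]
      ring
    rw [hX, abs_mul, abs_inv, abs_of_pos ha0] at hb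
    set Y := DE (x (φ k)) (P (x (φ k)) (x (φ k) - xlim)) +
      θ * DF (ιC (x (φ k))) (ιC (P (x (φ k)) (x (φ k) - xlim))) with hY
    have h7 : a * (a⁻¹ * |Y|) ≤ a * (ε / (2 * a)) :=
      mul_le_mul_of_nonneg_left hb ha0.le
    have h8 : a * (a⁻¹ * |Y|) = |Y| := by field_simp
    have h9 : a * (ε / (2 * a)) = ε / 2 := by field_simp
    rw [Real.dist_0_eq_abs]
    rw [h8, h9] at h7
    linarith
  -- Term 2
  have hT2 : Tendsto (fun k => -(θ * DF (ιC (x (φ k)))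
      (ιC (P (x (φ k)) (x (φ k) - xlim))))) atTop (𝓝 0) := by
    apply squeeze_zero_norm' (a := fun k =>
      θ * ((‖DF (ιC xlim)‖ + 1) * CPr) * ‖ιC (x (φ k) - xlim)‖)
    · filter_upwards [hDFnorm] with k hk
      have hPrEq : ιC (P (x (φ k)) (x (φ k) - xlim)) =
          Pr (x (φ k)) (ιC (x (φ k) - xlim)) := hPr _ (hxM (φ k)) _
      have b1 : ‖ιC (P (x (φ k)) (x (φ k) - xlim))‖ ≤ CPr * ‖ιC (x (φ k) - xlim)‖ := by
        rw [hPrEq]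
        exact le_trans (ContinuousLinearMap.le_opNorm _ _)
          (mul_le_mul_of_nonneg_right (hCPr _ (hmemV k)) (norm_nonneg _))
      have b2 : ‖DF (ιC (x (φ k))) (ιC (P (x (φ k)) (x (φ k) - xlim)))‖ ≤
          (‖DF (ιC xlim)‖ + 1) * (CPr * ‖ιC (x (φ k) - xlim)‖) :=
        le_trans (ContinuousLinearMap.le_opNorm _ _)
          (mul_le_mul hk b1 (norm_nonneg _) (by positivity))
      calc ‖-(θ * DF (ιC (x (φ k))) (ιC (P (x (φ k)) (x (φ k) - xlim))))‖
          = θ * ‖DF (ιC (x (φ k))) (ιC (P (x (φ k)) (x (φ k) - xlim)))‖ := by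
            rw [norm_neg, norm_mul, Real.norm_eq_abs (θ), abs_of_pos hθ]
        _ ≤ θ * ((‖DF (ιC xlim)‖ + 1) * (CPr * ‖ιC (x (φ k) - xlim)‖)) :=
            mul_le_mul_of_nonneg_left b2 hθ.le
        _ = θ * ((‖DF (ιC xlim)‖ + 1) * CPr) * ‖ιC (x (φ k) - xlim)‖ := by ring
    · simpa using hnC.const_mul (θ * ((‖DF (ιC xlim)‖ + 1) * CPr))
  -- Term 3
  have hT3 : Tendsto (fun k => S (x (φ k)) (ιB (x (φ k) - xlim))) atTop (𝓝 0) := by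
    apply squeeze_zero_norm' (a := fun k => CS * ‖ιB (x (φ k) - xlim)‖)
    · filter_upwards with k
      exact le_trans (ContinuousLinearMap.le_opNorm _ _)
        (mul_le_mul_of_nonneg_right (hCS _ (hmemV k)) (norm_nonneg _))
    · simpa using hnB.const_mul CS
  -- Term 4
  have hT4 : Tendsto (fun k => -(R (x (φ k)) (ιB (x (φ k) - xlim)))) atTop (𝓝 0) := by
    apply squeeze_zero_norm' (a := fun k => CR * ‖ιB (x (φ k) - xlim)‖)
    · filter_upwards with k
      rw [norm_neg]
      exact le_trans (ContinuousLinearMap.le_opNorm _ _)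
        (mul_le_mul_of_nonneg_right (hCR _ (hmemV k)) (norm_nonneg _))
    · simpa using hnB.const_mul CR
  -- Term 5
  have hq : Tendsto (fun k => Q xlim (x (φ k) - xlim)) atTop (𝓝 0) := by
    obtain ⟨y, hy⟩ := (InnerProductSpace.toDual ℝ H).surjective (Q xlim)
    have hy' : ∀ z : H, Q xlim z = (inner ℝ y z : ℝ) := by
      intro z
      have := congrArg (fun f => (f : H →L[ℝ] ℝ) z) hy
      simpa [InnerProductSpace.toDual_apply_apply] using this.symm
    have h0 : Tendsto (fun k => (inner ℝ y (x (φ k)) : ℝ) - (inner ℝ y xlim : ℝ))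
        atTop (𝓝 0) := by
      simpa using (hweak' y).sub (tendsto_const_nhds (x := (inner ℝ y xlim : ℝ)))
    refine h0.congr fun k => ?_
    rw [hy' (x (φ k) - xlim), inner_sub_right]
  have hT5 : Tendsto (fun k => -(μ (x (φ k)) * Q xlim (x (φ k) - xlim))) atTop (𝓝 0) := by
    apply squeeze_zero_norm' (a := fun k => M' * |Q xlim (x (φ k) - xlim)|)
    · filter_upwards with k
      rw [norm_neg, Real.norm_eq_abs, abs_mul, abs_of_pos (hμ_pos _ (hxM (φ k)))]
      exact mul_le_mul_of_nonneg_right (hμb _ (hmemV k)).2 (abs_nonneg _)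
    · simpa using hq.abs.const_mul M'
  -- sum of the five terms
  have hsum : Tendsto (fun k =>
      (DE (x (φ k)) (P (x (φ k)) (x (φ k) - xlim)) +
        θ * DF (ιC (x (φ k))) (ιC (P (x (φ k)) (x (φ k) - xlim)))) +
      (-(θ * DF (ιC (x (φ k))) (ιC (P (x (φ k)) (x (φ k) - xlim))))) +
      S (x (φ k)) (ιB (x (φ k) - xlim)) +
      (-(R (x (φ k)) (ιB (x (φ k) - xlim)))) +
      (-(μ (x (φ k)) * Q xlim (x (φ k) - xlim)))) atTop (𝓝 0) := by
    simpa using ((((hT1.add hT2).add hT3).add hT4).add hT5)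
  -- the key identity
  have hkey : ∀ k, μ (x (φ k)) * Q (x (φ k) - xlim) (x (φ k) - xlim) =
      (DE (x (φ k)) (P (x (φ k)) (x (φ k) - xlim)) +
        θ * DF (ιC (x (φ k))) (ιC (P (x (φ k)) (x (φ k) - xlim)))) +
      (-(θ * DF (ιC (x (φ k))) (ιC (P (x (φ k)) (x (φ k) - xlim))))) +
      S (x (φ k)) (ιB (x (φ k) - xlim)) +
      (-(R (x (φ k)) (ιB (x (φ k) - xlim)))) +
      (-(μ (x (φ k)) * Q xlim (x (φ k) - xlim))) := by
    intro k
    have hsp := hsplit (x (φ k)) (hxM (φ k)) (x (φ k) - xlim)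
    have hd := hD (x (φ k)) (hxM (φ k)) (x (φ k) - xlim)
    have e1 : DE (x (φ k)) (x (φ k) - xlim) -
        DE (x (φ k)) (P (x (φ k)) (x (φ k) - xlim)) =
        S (x (φ k)) (ιB (x (φ k) - xlim)) := by
      rw [← map_sub]; exact hd
    have hQsub : Q (x (φ k) - xlim) (x (φ k) - xlim) =
        Q (x (φ k)) (x (φ k) - xlim) - Q xlim (x (φ k) - xlim) := by
      simp [map_sub]; ring
    rw [hQsub, mul_sub]
    linarith
  have hzero : Tendsto (fun k => μ (x (φ k)) *
      Q (x (φ k) - xlim) (x (φ k) - xlim)) atTop (𝓝 0) :=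
    hsum.congr fun k => (hkey k).symm
  -- squeeze
  have hlow : ∀ k, c * m * ‖x (φ k) - xlim‖ ^ 2 ≤
      μ (x (φ k)) * Q (x (φ k) - xlim) (x (φ k) - xlim) := by
    intro k
    have h1 := hS2' (x (φ k) - xlim)
    have h2 : (0:ℝ) ≤ Q (x (φ k) - xlim) (x (φ k) - xlim) :=
      le_trans (by positivity) h1
    obtain ⟨hm1, hm2⟩ := hμb _ (hmemV k)
    calc c * m * ‖x (φ k) - xlim‖ ^ 2 = m * (c * ‖x (φ k) - xlim‖ ^ 2) := by ring
      _ ≤ m * Q (x (φ k) - xlim) (x (φ k) - xlim) :=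
        mul_le_mul_of_nonneg_left h1 hm.le
      _ ≤ μ (x (φ k)) * Q (x (φ k) - xlim) (x (φ k) - xlim) :=
        mul_le_mul_of_nonneg_right hm1 h2
  have hsq : Tendsto (fun k => c * m * ‖x (φ k) - xlim‖ ^ 2) atTop (𝓝 0) :=
    squeeze_zero (fun k => by positivity) hlow hzero
  have hcm : (0:ℝ) < c * m := mul_pos hc hm
  have hn2 : Tendsto (fun k => ‖x (φ k) - xlim‖ ^ 2) atTop (𝓝 0) := by
    have h' := hsq.const_mul ((c * m)⁻¹)
    rw [mul_zero] at h'
    refine h'.congr fun k => ?_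
    field_simp
  have hnorm0 : Tendsto (fun k => ‖x (φ k) - xlim‖) atTop (𝓝 0) := by
    have h'' : Tendsto (fun k => Real.sqrt (‖x (φ k) - xlim‖ ^ 2)) atTop
        (𝓝 (Real.sqrt 0)) := (Real.continuous_sqrt.tendsto 0).comp hn2
    rw [Real.sqrt_zero] at h''
    refine h''.congr fun k => Real.sqrt_sq (norm_nonneg _)
  refine ⟨φ, xlim, hφ, hxlimM, ?_⟩
  rw [tendsto_iff_norm_sub_tendsto_zero]
  exact hnorm0

end
end

section
/- Let s ∈ (0,1), ρ ∈ [1,∞), n ≥ 1, and let f : ℝ/ℤ → ℝⁿ be measurable. Then ∫_{ℝ/ℤ} ∫_{−1/2}^{1/2} ∫₀¹ |f(u+θw) − f(u)|^ρ / |w|^{1+sρ} dθ dw du ≤ ∫_{ℝ/ℤ} ∫_{ℝ/ℤ} |f(u) − f(v)|^ρ / |u−v|_{ℝ/ℤ}^{1+sρ} du dv, as an inequality of values in [0,∞]. -/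
open MeasureTheory Set
open scoped ENNReal

noncomputable section

/-- The intrinsic distance of `u` and `v` on the circle `ℝ/ℤ`. -/
def circDist (u v : ℝ) : ℝ := |Int.fract (u - v + 1/2) - 1/2|

private lemma lintegral_Ioc_eq_of_periodic (g : ℝ → ℝ≥0∞)
    (hg : Function.Periodic g 1) (a : ℝ) :
    ∫⁻ v in Ioc a (a + 1), g v = ∫⁻ v in Ioc (0:ℝ) (0 + 1), g v := by
  haveI : VAddInvariantMeasure (AddSubgroup.zmultiples (1:ℝ)) ℝ volume :=
    ⟨fun c s _ => measure_preimage_add _ _ _⟩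
  apply IsAddFundamentalDomain.setLIntegral_eq (G := AddSubgroup.zmultiples (1:ℝ))
  exacts [isAddFundamentalDomain_Ioc one_pos a, isAddFundamentalDomain_Ioc one_pos 0,
    hg.map_vadd_zmultiples]

set_option maxHeartbeats 1000000 in
/-- **Triple integral estimate**: for `s ∈ (0,1)`, `ρ ∈ [1,∞)` and a measurable
`1`-periodic `f : ℝ/ℤ → ℝⁿ`,
`∫∫∫ |f(u+θw) - f(u)|^ρ / |w|^{1+sρ} dθ dw du ≤ ⌊f⌋_{s,ρ}^ρ`,
as an inequality of values in `[0,∞]`. -/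
theorem triple_integral_le_gagliardo
    (n : ℕ) (hn : 1 ≤ n) (s ρ : ℝ) (hs : s ∈ Ioo (0:ℝ) 1) (hρ : 1 ≤ ρ)
    (f : ℝ → EuclideanSpace ℝ (Fin n))
    (hf : Measurable f) (hper : Function.Periodic f 1) :
    (∫⁻ u in Ioc (0:ℝ) 1, ∫⁻ w in Ioc (-(1:ℝ)/2) (1/2), ∫⁻ θ in Ioc (0:ℝ) 1,
        ENNReal.ofReal (‖f (u + θ * w) - f u‖ ^ ρ / |w| ^ (1 + s * ρ))) ≤
      ∫⁻ u in Ioc (0:ℝ) 1, ∫⁻ v in Ioc (0:ℝ) 1,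
        ENNReal.ofReal (‖f u - f v‖ ^ ρ / circDist u v ^ (1 + s * ρ)) := by
  obtain ⟨hs0, hs1⟩ := hs
  have hρ0 : (0:ℝ) < ρ := lt_of_lt_of_le one_pos hρ
  have hsρ : 0 < s * ρ := mul_pos hs0 hρ0
  set e : ℝ := 1 + s * ρ with he
  have he1 : (1:ℝ) < e := by simp [he]; linarith
  set S : Set ℝ := Ioc (-(1:ℝ)/2) (1/2) with hS
  set F : ℝ → ℝ → ℝ≥0∞ := fun u z => ENNReal.ofReal (‖f (u + z) - f u‖ ^ ρ / |z| ^ e) with hF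
  set H : ℝ → ℝ → ℝ≥0∞ := fun u v => ENNReal.ofReal (‖f u - f v‖ ^ ρ / circDist u v ^ e) with hH
  -- measurability
  have hFm : ∀ u, Measurable (F u) := by
    intro u
    apply ENNReal.measurable_ofReal.comp
    exact (((hf.comp (measurable_const.add measurable_id)).sub
      measurable_const).norm.pow_const ρ).div (measurable_id.abs.pow_const e)
  -- Step A : for each u, the inner double integral is at most ∫ z in S, F u z
  have stepA : ∀ u : ℝ,
      (∫⁻ w in S, ∫⁻ θ in Ioc (0:ℝ) 1,
        ENNReal.ofReal (‖f (u + θ * w) - f u‖ ^ ρ / |w| ^ e)) ≤ ∫⁻ z in S, F u z := by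
    intro u
    have hGm : Measurable (Function.uncurry fun (w θ : ℝ) =>
        ENNReal.ofReal (‖f (u + θ * w) - f u‖ ^ ρ / |w| ^ e)) := by
      apply ENNReal.measurable_ofReal.comp
      exact (((hf.comp (measurable_const.add (measurable_snd.mul measurable_fst))).sub
        measurable_const).norm.pow_const ρ).div ((measurable_fst.abs).pow_const e)
    rw [lintegral_lintegral_swap hGm.aemeasurable]
    have key : ∀ θ ∈ Ioc (0:ℝ) 1,
        (∫⁻ w in S, ENNReal.ofReal (‖f (u + θ * w) - f u‖ ^ ρ / |w| ^ e))
          ≤ ∫⁻ z in S, F u z := by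
      intro θ hθ
      obtain ⟨hθ0, hθ1⟩ := hθ
      set T : Set ℝ := Ioc (-θ/2) (θ/2) with hT
      have h1 : ∀ w : ℝ, ENNReal.ofReal (‖f (u + θ * w) - f u‖ ^ ρ / |w| ^ e)
          = ENNReal.ofReal (θ ^ e) * F u (θ * w) := by
        intro w
        rw [hF, ← ENNReal.ofReal_mul (Real.rpow_nonneg hθ0.le e)]
        rcases eq_or_ne w 0 with rfl | hw
        · simp [Real.zero_rpow hρ0.ne', Real.zero_rpow (by linarith : e ≠ 0)]
        · congr 1
          have habs : |θ * w| ^ e = θ ^ e * |w| ^ e := by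
            rw [abs_mul, abs_of_pos hθ0, Real.mul_rpow hθ0.le (abs_nonneg w)]
          rw [habs]
          have h2 : (0:ℝ) < θ ^ e := Real.rpow_pos_of_pos hθ0 e
          have h3 : (0:ℝ) < |w| ^ e := Real.rpow_pos_of_pos (abs_pos.2 hw) e
          field_simp
      have hpre : (fun w => θ * w) ⁻¹' T = S := by
        rw [hT, hS, preimage_const_mul_Ioc₀ _ _ hθ0,
          show -θ/2/θ = -1/2 by rw [div_right_comm, neg_div, div_self hθ0.ne'],
          show θ/2/θ = 1/2 by rw [div_right_comm, div_self hθ0.ne']]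
      have hmap : (∫⁻ w in S, F u (θ * w)) = ENNReal.ofReal θ⁻¹ * ∫⁻ z in T, F u z := by
        calc (∫⁻ w in S, F u (θ * w))
            = ∫⁻ w in (fun w => θ * w) ⁻¹' T, F u (θ * w) := by rw [hpre]
          _ = ∫⁻ z in T, F u z ∂(Measure.map (θ * ·) volume) :=
              (setLIntegral_map measurableSet_Ioc (hFm u) (measurable_const_mul θ)).symm
          _ = ENNReal.ofReal θ⁻¹ * ∫⁻ z in T, F u z := by
              rw [Real.map_volume_mul_left hθ0.ne', Measure.restrict_smul,
                lintegral_smul_measure, abs_of_pos (inv_pos.2 hθ0), smul_eq_mul]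
      calc (∫⁻ w in S, ENNReal.ofReal (‖f (u + θ * w) - f u‖ ^ ρ / |w| ^ e))
          = ∫⁻ w in S, ENNReal.ofReal (θ ^ e) * F u (θ * w) := by simp_rw [h1]
        _ = ENNReal.ofReal (θ ^ e) * ∫⁻ w in S, F u (θ * w) :=
            lintegral_const_mul' _ _ ENNReal.ofReal_ne_top
        _ = (ENNReal.ofReal (θ ^ e) * ENNReal.ofReal θ⁻¹) * ∫⁻ z in T, F u z := by
            rw [hmap, mul_assoc]
        _ ≤ 1 * ∫⁻ z in S, F u z := by
            apply mul_le_mul'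
            · rw [← ENNReal.ofReal_mul (Real.rpow_nonneg hθ0.le e)]
              apply ENNReal.ofReal_le_one.2
              have : θ ^ e * θ⁻¹ = θ ^ (s * ρ) := by
                rw [← Real.rpow_neg_one θ, ← Real.rpow_add hθ0]
                norm_num [he]
              rw [this]
              exact Real.rpow_le_one hθ0.le hθ1 hsρ.le
            · apply lintegral_mono_set
              rw [hT, hS]
              exact Ioc_subset_Ioc (by linarith) (by linarith)
        _ = ∫⁻ z in S, F u z := one_mul _
    calc (∫⁻ θ in Ioc (0:ℝ) 1, ∫⁻ w in S,
          ENNReal.ofReal (‖f (u + θ * w) - f u‖ ^ ρ / |w| ^ e))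
        ≤ ∫⁻ _θ in Ioc (0:ℝ) 1, ∫⁻ z in S, F u z := setLIntegral_mono measurable_const key
      _ = ∫⁻ z in S, F u z := by simp [Real.volume_Ioc]
  -- Step B : for each u, ∫ z in S, F u z = ∫ v in Ioc 0 1, H u v
  have stepB : ∀ u : ℝ, (∫⁻ z in S, F u z) = ∫⁻ v in Ioc (0:ℝ) 1, H u v := by
    intro u
    have h1 : ∀ z ∈ S, F u z = H u (u + z) := by
      intro z hz
      obtain ⟨hz1, hz2⟩ := hz
      have hfract : circDist u (u + z) = |z| := by
        have : u - (u + z) + 1/2 = -z + 1/2 := by ring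
        rw [circDist, this, Int.fract_eq_self.2 ⟨by linarith [hz2], by
          simp only [hS, mem_Ioc] at *; linarith⟩]
        rw [show -z + 1/2 - 1/2 = -z by ring, abs_neg]
      simp only [hF, hH]
      rw [hfract, norm_sub_rev]
    have hpre : (fun z => u + z) ⁻¹' Ioc (u - 1/2) (u - 1/2 + 1) = S := by
      rw [preimage_const_add_Ioc, hS]
      congr 1 <;> ring
    have hHm : Measurable (H u) := by
      apply ENNReal.measurable_ofReal.comp
      apply Measurable.div
      · exact ((measurable_const.sub hf).norm).pow_const ρ
      · apply fun h => Measurable.pow_const h e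
        apply Measurable.abs
        apply Measurable.sub _ measurable_const
        exact ((measurable_const.sub measurable_id).add measurable_const).fract
    calc (∫⁻ z in S, F u z)
        = ∫⁻ z in S, H u (u + z) := setLIntegral_congr_fun measurableSet_Ioc
            h1
      _ = ∫⁻ z in (fun z => u + z) ⁻¹' Ioc (u - 1/2) (u - 1/2 + 1), H u (u + z) := by rw [hpre]
      _ = ∫⁻ v in Ioc (u - 1/2) (u - 1/2 + 1), H u v ∂(Measure.map (u + ·) volume) :=
          (setLIntegral_map measurableSet_Ioc hHm (measurable_const_add u)).symm
      _ = ∫⁻ v in Ioc (u - 1/2) (u - 1/2 + 1), H u v := by rw [map_add_left_eq_self]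
      _ = ∫⁻ v in Ioc (0:ℝ) (0 + 1), H u v := by
          apply lintegral_Ioc_eq_of_periodic
          intro v
          simp only [hH]
          have hfp : f (v + 1) = f v := hper v
          have hcd : circDist u (v + 1) = circDist u v := by
            rw [circDist, circDist,
              show u - (v + 1) + 1/2 = (u - v + 1/2) - ((1:ℤ):ℝ) by push_cast; ring,
              Int.fract_sub_intCast]
          rw [hfp, hcd]
      _ = ∫⁻ v in Ioc (0:ℝ) 1, H u v := by norm_num
  calc (∫⁻ u in Ioc (0:ℝ) 1, ∫⁻ w in S, ∫⁻ θ in Ioc (0:ℝ) 1,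
        ENNReal.ofReal (‖f (u + θ * w) - f u‖ ^ ρ / |w| ^ e))
      ≤ ∫⁻ u in Ioc (0:ℝ) 1, ∫⁻ z in S, F u z := lintegral_mono stepA
    _ = ∫⁻ u in Ioc (0:ℝ) 1, ∫⁻ v in Ioc (0:ℝ) 1, H u v := lintegral_congr stepB


end
end
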